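/- arXiv:1211.3395 — 2 statements merged into one kernel-verified Lean document; each statement's English description precedes it below -/
import Mathlib

section
/- Let Ω ⊂ ℝ² be a bounded convex domain with smooth boundary and let H ⊂ int(Ω) be a smooth closed curve with unit-speed parametrization q and unit tangent T_H. For s on ∂Ω (parametrized by r) and t on H, let ω(s,t) = (q(t) − r(s))/|q(t) − r(s)| be the unit relative displacement vector. If ∂_s⟨ω(s,t), T_H(t)⟩ = 0 at some (s,t), then |⟨T_H(t), ω(s,t)⟩| = 1. -/
open Real

local notation "E2" => EuclideanSpace ℝ (Fin 2)

private lemma stmt8_key (m A B C : ℝ) (hm : 0 < m)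
    (h : -(2 * -B / (2 * m)) / m ^ 2 * A + m⁻¹ * -C = 0) : C * m ^ 2 = A * B := by
  have hm0 : m ≠ 0 := ne_of_gt hm
  field_simp at h
  nlinarith [h]

private lemma stmt8_div (m A B C : ℝ) (h0 : m ≠ 0) (hk : C * m ^ 2 = A * B) :
    C = (m⁻¹ * A) * (m⁻¹ * B) := by
  field_simp
  linarith [hk]

private lemma stmt8_sq (m A : ℝ) (hm : 0 < m) (h : A ^ 2 < m ^ 2) : (m⁻¹ * A) ^ 2 < 1 := by
  rw [mul_pow, inv_pow, inv_mul_lt_iff₀ (by positivity), mul_one]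
  exact h

private lemma stmt8_alg (w0 w1 v0 v1 T0 T1 : ℝ)
    (hW : w0 * w0 + w1 * w1 = 1) (hV : v0 * v0 + v1 * v1 = 1) (hT : T0 * T0 + T1 * T1 = 1)
    (hE : v0 * T0 + v1 * T1 = (w0 * T0 + w1 * T1) * (w0 * v0 + w1 * v1))
    (hC : (w0 * v0 + w1 * v1) ^ 2 < 1) :
    |T0 * w0 + T1 * w1| = 1 := by
  have hBD : (w0*T1-w1*T0)*(w0*v1-w1*v0) = 0 := by
    linear_combination hE + (v0*T0+v1*T1)*hW
  have hD2 : (w0*v1-w1*v0)^2 = 1 - (w0*v0+w1*v1)^2 := by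
    linear_combination (v0^2+v1^2)*hW + hV
  have hD : w0*v1-w1*v0 ≠ 0 := by
    intro h; rw [h] at hD2; nlinarith
  have hB : w0*T1-w1*T0 = 0 := (mul_eq_zero.1 hBD).resolve_right hD
  have ha : (T0*w0+T1*w1)^2 = 1 := by
    linear_combination (T0^2+T1^2)*hW + hT - (w0*T1-w1*T0)*hB
  rcases mul_self_eq_one_iff.mp (by nlinarith : (T0*w0+T1*w1)*(T0*w0+T1*w1) = 1) with h | h <;>
    rw [h] <;> norm_num

/-- If `Ω ⊂ ℝ²` is a bounded convex open domain with boundary curve `r`, `H` is a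
smooth closed curve inside `Ω` with unit-speed parametrization `q`, and
`ω(s,t) = (q(t) − r(s))/|q(t) − r(s)|`, then at any critical point in `s` of
`s ↦ ⟨ω(s,t), T_H(t)⟩` one has `|⟨T_H(t), ω(s,t)⟩| = 1`. -/
theorem stmt_8 (Ω : Set E2) (hconv : Convex ℝ Ω)
    (hopen : IsOpen Ω) (hbdd : Bornology.IsBounded Ω)
    (r q : ℝ → E2)
    (hr : Differentiable ℝ r) (hq : Differentiable ℝ q)
    (hrbd : ∀ s, r s ∈ frontier Ω) (hqin : ∀ t, q t ∈ Ω)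
    (hrunit : ∀ s, ‖deriv r s‖ = 1) (hqunit : ∀ t, ‖deriv q t‖ = 1)
    (ω : ℝ → ℝ → E2)
    (hω : ∀ s t, ω s t = ‖q t - r s‖⁻¹ • (q t - r s))
    (s t : ℝ)
    (hcrit : deriv (fun s' => (inner ℝ (ω s' t) (deriv q t) : ℝ)) s = 0) :
    |(inner ℝ (deriv q t) (ω s t) : ℝ)| = 1 := by
  have hrnot : ∀ s', r s' ∉ Ω := by
    intro s' h
    have h2 := hrbd s'
    rw [hopen.frontier_eq] at h2
    exact h2.2 h
  have hne : ∀ s', q t - r s' ≠ 0 :=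
    fun s' => sub_ne_zero.2 fun h => hrnot s' (h ▸ hqin t)
  set T : E2 := deriv q t with hT
  set v : E2 := deriv r s with hv
  set u : E2 := q t - r s with hu
  have hu0 : u ≠ 0 := hne s
  have hm : (0:ℝ) < ‖u‖ := norm_pos_iff.2 hu0
  have hm0 : ‖u‖ ≠ 0 := ne_of_gt hm
  -- derivative computation
  have hU : HasDerivAt (fun s' => q t - r s') (-v) s := (hr s).hasDerivAt.const_sub (q t)
  have hA : HasDerivAt (fun s' => (inner ℝ (q t - r s') T : ℝ)) (-(inner ℝ v T : ℝ)) s := by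
    have := hU.inner (𝕜 := ℝ) (hasDerivAt_const s T)
    simpa [inner_neg_left] using this
  have hN : HasDerivAt (fun s' => ‖q t - r s'‖ ^ 2) (2 * (inner ℝ u (-v) : ℝ)) s := by
    simpa using hU.norm_sq
  have hN0 : ‖q t - r s‖ ^ 2 ≠ 0 := pow_ne_zero _ hm0
  have hB : HasDerivAt (fun s' => ‖q t - r s'‖)
      ((2 * (inner ℝ u (-v) : ℝ)) / (2 * ‖u‖)) s := by
    have h := hN.sqrt hN0
    have heq : (fun s' => Real.sqrt (‖q t - r s'‖ ^ 2)) = fun s' => ‖q t - r s'‖ := by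
      funext x; exact Real.sqrt_sq (norm_nonneg _)
    rw [heq] at h
    simpa [Real.sqrt_sq (norm_nonneg u)] using h
  have hInv : HasDerivAt (fun s' => (‖q t - r s'‖)⁻¹)
      (-((2 * (inner ℝ u (-v) : ℝ)) / (2 * ‖u‖)) / (‖u‖ ^ 2)) s := hB.inv hm0
  have hF : HasDerivAt (fun s' => (‖q t - r s'‖)⁻¹ * (inner ℝ (q t - r s') T : ℝ))
      ((-((2 * (inner ℝ u (-v) : ℝ)) / (2 * ‖u‖)) / (‖u‖ ^ 2)) * (inner ℝ u T : ℝ)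
        + (‖u‖)⁻¹ * (-(inner ℝ v T : ℝ))) s := hInv.mul hA
  have hfun : (fun s' => (inner ℝ (ω s' t) T : ℝ))
      = fun s' => (‖q t - r s'‖)⁻¹ * (inner ℝ (q t - r s') T : ℝ) := by
    funext x; rw [hω, real_inner_smul_left]
  rw [hfun, hF.deriv] at hcrit
  rw [inner_neg_right] at hcrit
  have key : (inner ℝ v T : ℝ) * ‖u‖ ^ 2 = (inner ℝ u T : ℝ) * (inner ℝ u v : ℝ) :=
    stmt8_key ‖u‖ _ _ _ hm hcrit
  -- separating hyperplane
  obtain ⟨φ, hφ⟩ := geometric_hahn_banach_open_point hconv hopen (hrnot s)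
  have hcl : ∀ x ∈ closure Ω, φ x ≤ φ (r s) :=
    fun x hx => closure_minimal (fun a ha => le_of_lt (hφ a ha))
      (isClosed_le φ.continuous continuous_const) hx
  have hle : ∀ s', φ (r s') ≤ φ (r s) := fun s' =>
    hcl _ (frontier_subset_closure (hrbd s'))
  have hgd : HasDerivAt (fun x => φ (r x)) (φ v) s :=
    φ.hasFDerivAt.comp_hasDerivAt s (hr s).hasDerivAt
  have hφv : φ v = 0 := by
    have hmax : IsLocalMax (fun x => φ (r x)) s := Filter.Eventually.of_forall hle
    have := hmax.deriv_eq_zero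
    rwa [hgd.deriv] at this
  have hφu : φ u < 0 := by
    have := hφ (q t) (hqin t)
    simp only [hu, map_sub]
    linarith
  -- strict Cauchy-Schwarz
  have hv1 : ‖v‖ = 1 := hrunit s
  have hT1 : ‖T‖ = 1 := hqunit t
  have hv0 : v ≠ 0 := by intro h; rw [h] at hv1; simp at hv1
  have hCS : (inner ℝ u v : ℝ) ^ 2 < ‖u‖ ^ 2 := by
    rcases lt_or_eq_of_le (abs_real_inner_le_norm u v) with h | h
    · rw [hv1, mul_one] at h
      calc (inner ℝ u v : ℝ) ^ 2 = |(inner ℝ u v : ℝ)| ^ 2 := (sq_abs _).symm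
        _ < ‖u‖ ^ 2 := by nlinarith [abs_nonneg (inner ℝ u v : ℝ)]
    · exfalso
      have h' : ‖(inner ℝ u v : ℝ)‖ = ‖u‖ * ‖v‖ := by rwa [Real.norm_eq_abs]
      obtain ⟨c, hc0, hcv⟩ := (norm_inner_eq_norm_iff (𝕜 := ℝ) hu0 hv0).1 h'
      have hφc : φ v = c * φ u := by rw [hcv, map_smul]; rfl
      rw [hφv] at hφc
      rcases mul_eq_zero.1 hφc.symm with h | h
      · exact hc0 h
      · exact (ne_of_lt hφu) h
  -- the unit vector w
  have hwu : ω s t = ‖u‖⁻¹ • u := hω s t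
  have hw1 : ‖ω s t‖ = 1 := by
    rw [hwu, norm_smul, norm_inv, norm_norm, inv_mul_cancel₀ hm0]
  have hwT : (inner ℝ (ω s t) T : ℝ) = ‖u‖⁻¹ * (inner ℝ u T : ℝ) := by
    rw [hwu, real_inner_smul_left]
  have hwv : (inner ℝ (ω s t) v : ℝ) = ‖u‖⁻¹ * (inner ℝ u v : ℝ) := by
    rw [hwu, real_inner_smul_left]
  have hE : (inner ℝ v T : ℝ) = (inner ℝ (ω s t) T : ℝ) * (inner ℝ (ω s t) v : ℝ) := by
    rw [hwT, hwv]; exact stmt8_div ‖u‖ _ _ _ hm0 key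
  have hC : (inner ℝ (ω s t) v : ℝ) ^ 2 < 1 := by
    rw [hwv]; exact stmt8_sq ‖u‖ _ hm hCS
  -- coordinates
  have coord : ∀ x y : E2, (inner ℝ x y : ℝ) = x 0 * y 0 + x 1 * y 1 := by
    intro x y
    simp [PiLp.inner_apply, RCLike.inner_apply, Fin.sum_univ_two]
    ring
  have hsq : ∀ x : E2, ‖x‖ = 1 → x 0 * x 0 + x 1 * x 1 = 1 := by
    intro x hx
    have h := real_inner_self_eq_norm_sq x
    rw [coord, hx] at h
    simpa using h
  simp only [coord] at hE hC
  rw [coord]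
  exact stmt8_alg (ω s t 0) (ω s t 1) (v 0) (v 1) (T 0) (T 1)
    (hsq _ hw1) (hsq _ hv1) (hsq _ hT1) hE hC
end

section
/- Let q : ℝ → ℝ² be real-analytic and unit-speed with curvature κ_H, let r(s) ∈ ℝ² with q(a) ≠ r(s), and let ρ^ℂ(t, s) = √(⟨q^ℂ(t) − r(s), q^ℂ(t)* − r(s)̄⟩) be the holomorphic extension of the distance function in t (principal branch). Suppose Y(s) satisfies the glancing conditions ⟨ω(s,Y(s)), T_H(Y(s))⟩ = −1 and ⟨ω(s,Y(s)), ν_H(Y(s))⟩ = 0. Then, for complex t near Y(s), ρ^ℂ(t,s) = |q(Y(s)) − r(s)| − (t − Y(s)) + (1/6)κ_H²(Y(s))(t − Y(s))³ + O(|t − Y(s)|⁴). -/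
open Real Asymptotics

local notation "E2" => EuclideanSpace ℝ (Fin 2)

/-- Derivative of a holomorphic function at a real point, read off from its real restriction. -/
private lemma deriv_eq_of_real_restrict {g : ℂ → ℂ} {x : ℝ} (hg : DifferentiableAt ℂ g (x : ℂ))
    {u : ℝ → ℂ} {u' : ℂ} (hu : HasDerivAt u u' x) (heq : ∀ y : ℝ, g (y : ℂ) = u y) :
    deriv g (x : ℂ) = u' := by
  have h1 : HasDerivAt (fun y : ℝ => g (y : ℂ)) (deriv g (x : ℂ)) x :=
    hg.hasDerivAt.comp_ofReal
  have h2 : (fun y : ℝ => g (y : ℂ)) = u := funext heq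
  rw [h2] at h1
  exact h1.unique hu

/-- Expansion of the complexified distance function around a glancing point: if
`Y` satisfies `⟨ω(s,Y), T_H(Y)⟩ = −1` and `⟨ω(s,Y), ν_H(Y)⟩ = 0` for the point
`rs = r(s)`, then the holomorphic continuation
`ρ^ℂ(t) = ((q^ℂ(t)₀ − rs₀)² + (q^ℂ(t)₁ − rs₁)²)^{1/2}` satisfies
`ρ^ℂ(Y + w) = |q(Y) − rs| − w + (1/6)κ(Y)² w³ + O(|w|⁴)` as `w → 0` in `ℂ`. -/
theorem stmt_13 (ε₀ : ℝ) (hε₀ : 0 < ε₀)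
    (q T ν : ℝ → E2) (κ : ℝ → ℝ) (qC : ℂ → Fin 2 → ℂ) (ρC : ℂ → ℂ)
    (hT : ∀ t, HasDerivAt q (T t) t)
    (hFrenetT : ∀ t, HasDerivAt T (κ t • ν t) t)
    (hFrenetν : ∀ t, HasDerivAt ν (-(κ t) • T t) t)
    (hTunit : ∀ t, ‖T t‖ = 1) (hνunit : ∀ t, ‖ν t‖ = 1)
    (hqC : ∀ i, DifferentiableOn ℂ (fun z => qC z i) {z : ℂ | |z.im| < ε₀})
    (hreal : ∀ x : ℝ, ∀ i, qC (x : ℂ) i = ((q x) i : ℂ))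
    (rs : E2) (Y : ℝ) (hne : q Y ≠ rs)
    (hρ : ∀ z : ℂ, |z.im| < ε₀ →
      ρC z = ((qC z 0 - (rs 0 : ℂ)) ^ 2 + (qC z 1 - (rs 1 : ℂ)) ^ 2) ^ ((1 : ℂ) / 2))
    (hglanceT : (inner ℝ (T Y) (‖q Y - rs‖⁻¹ • (q Y - rs)) : ℝ) = -1)
    (hglanceν : (inner ℝ (ν Y) (‖q Y - rs‖⁻¹ • (q Y - rs)) : ℝ) = 0) :
    (fun w : ℂ => ρC ((Y : ℂ) + w) -
        ((‖q Y - rs‖ : ℂ) - w + (1 / 6 : ℂ) * (κ Y : ℂ) ^ 2 * w ^ 3))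
      =O[nhds 0] fun w : ℂ => ‖w‖ ^ 4 := by
  classical
  set d : ℝ := ‖q Y - rs‖ with hd_def
  have hd : 0 < d := norm_pos_iff.mpr (sub_ne_zero.mpr hne)
  -- coordinatewise derivatives
  have hq' : ∀ (i : Fin 2) (x : ℝ), HasDerivAt (fun y => q y i) (T x i) x := by
    intro i x
    have h := (EuclideanSpace.proj (𝕜 := ℝ) i).hasFDerivAt.comp_hasDerivAt x (hT x)
    simp at h; exact h
  have hT' : ∀ (i : Fin 2) (x : ℝ), HasDerivAt (fun y => T y i) (κ x * ν x i) x := by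
    intro i x
    have h := (EuclideanSpace.proj (𝕜 := ℝ) i).hasFDerivAt.comp_hasDerivAt x (hFrenetT x)
    simp at h; exact h
  have hν' : ∀ (i : Fin 2) (x : ℝ), HasDerivAt (fun y => ν y i) (-κ x * T x i) x := by
    intro i x
    have h := (EuclideanSpace.proj (𝕜 := ℝ) i).hasFDerivAt.comp_hasDerivAt x (hFrenetν x)
    simp at h; rw [neg_mul]; exact h
  -- unit norms in coordinates
  have unit2 : ∀ v : E2, ‖v‖ = 1 → v 0 ^ 2 + v 1 ^ 2 = 1 := by
    intro v h
    have h2 : (inner ℝ v v : ℝ) = 1 := by rw [real_inner_self_eq_norm_sq, h]; norm_num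
    rw [PiLp.inner_apply] at h2
    simp [Fin.sum_univ_two] at h2
    nlinarith [h2]
  have hsT : T Y 0 ^ 2 + T Y 1 ^ 2 = 1 := unit2 _ (hTunit Y)
  have hsνu : ∀ x : ℝ, ν x 0 ^ 2 + ν x 1 ^ 2 = 1 := fun x => unit2 _ (hνunit x)
  -- the glancing direction
  have hvnorm : ‖d⁻¹ • (q Y - rs)‖ = 1 := by
    rw [norm_smul, Real.norm_eq_abs, abs_of_pos (inv_pos.mpr hd), ← hd_def]
    field_simp
  have hTeq : T Y = -(d⁻¹ • (q Y - rs)) := by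
    have h0 : ‖T Y + d⁻¹ • (q Y - rs)‖ ^ 2 = 0 := by
      rw [norm_add_sq_real, hglanceT, hTunit, hvnorm]; ring
    have h1 : T Y + d⁻¹ • (q Y - rs) = 0 :=
      norm_eq_zero.mp (pow_eq_zero_iff (n := 2) (by norm_num) |>.mp h0)
    linear_combination (norm := abel) h1
  have hqTc : ∀ i : Fin 2, q Y i - rs i = -d * T Y i := by
    intro i
    have h : T Y i = (-(d⁻¹ • (q Y - rs))) i := by rw [hTeq]
    have h2 : (-(d⁻¹ • (q Y - rs))) i = -(d⁻¹ * (q Y i - rs i)) := by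
      simp [smul_eq_mul]
    rw [h2] at h
    field_simp [hd.ne'] at h
    linarith
  have hglν : ν Y 0 * (q Y 0 - rs 0) + ν Y 1 * (q Y 1 - rs 1) = 0 := by
    have h := hglanceν
    rw [real_inner_smul_right] at h
    have h1 : (inner ℝ (ν Y) (q Y - rs) : ℝ) = 0 := by
      rcases mul_eq_zero.mp h with h' | h'
      · exact absurd h' (inv_ne_zero hd.ne')
      · exact h'
    rw [PiLp.inner_apply] at h1
    simpa [Fin.sum_univ_two, mul_comm] using h1
  have hsTν : T Y 0 * ν Y 0 + T Y 1 * ν Y 1 = 0 := by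
    rw [hqTc 0, hqTc 1] at hglν
    have h2 : d * (T Y 0 * ν Y 0 + T Y 1 * ν Y 1) = 0 := by linear_combination -hglν
    rcases mul_eq_zero.mp h2 with h' | h'
    · exact absurd h' hd.ne'
    · exact h'
  -- the strip
  set S : Set ℂ := {z : ℂ | |z.im| < ε₀} with hS_def
  have hSopen : IsOpen S := isOpen_lt (continuous_abs.comp Complex.continuous_im) continuous_const
  have hmemS : ∀ x : ℝ, (x : ℂ) ∈ S := by
    intro x; simp [hS_def, hε₀]
  have hA : ∀ i, AnalyticOnNhd ℂ (fun z => qC z i) S := fun i => (hqC i).analyticOnNhd hSopen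
  have hd1 : ∀ (i : Fin 2) (x : ℝ), deriv (fun z => qC z i) (x : ℂ) = ((T x i : ℝ) : ℂ) := by
    intro i x
    exact deriv_eq_of_real_restrict ((hA i) _ (hmemS x)).differentiableAt
      ((hq' i x).ofReal_comp) (fun y => hreal y i)
  have hd2 : ∀ (i : Fin 2) (x : ℝ),
      deriv (deriv fun z => qC z i) (x : ℂ) = ((κ x * ν x i : ℝ) : ℂ) := by
    intro i x
    exact deriv_eq_of_real_restrict ((hA i).deriv _ (hmemS x)).differentiableAt
      ((hT' i x).ofReal_comp) (hd1 i)
  -- differentiability of κ·νᵢ at Y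
  have hAdiff : ∀ i : Fin 2, DifferentiableAt ℝ (fun x : ℝ => κ x * ν x i) Y := by
    intro i
    have h1 : DifferentiableAt ℝ (fun x : ℝ => deriv (deriv fun z => qC z i) (x : ℂ)) Y :=
      (((hA i).deriv.deriv _ (hmemS Y)).differentiableAt.hasDerivAt.comp_ofReal).differentiableAt
    have h2 : (fun x : ℝ => κ x * ν x i)
        = fun x : ℝ => (deriv (deriv fun z => qC z i) (x : ℂ)).re := by
      funext x; rw [hd2 i x]; simp
    rw [h2]
    exact (Complex.reCLM.differentiable.differentiableAt).comp Y h1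
  set a : Fin 2 → ℝ := fun i => deriv (fun x : ℝ => κ x * ν x i) Y with ha_def
  have hai : ∀ i, HasDerivAt (fun x : ℝ => κ x * ν x i) (a i) Y := fun i =>
    (hAdiff i).hasDerivAt
  -- derivative of κ at Y
  have hκfun : κ = fun x => (κ x * ν x 0) * ν x 0 + (κ x * ν x 1) * ν x 1 := by
    funext x
    have h := hsνu x
    linear_combination (-(κ x)) * h
  set k : ℝ := a 0 * ν Y 0 + κ Y * ν Y 0 * (-κ Y * T Y 0)
      + (a 1 * ν Y 1 + κ Y * ν Y 1 * (-κ Y * T Y 1)) with hk_def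
  have hκd : HasDerivAt κ k Y := by
    have h := ((hai 0).mul (hν' 0 Y)).add ((hai 1).mul (hν' 1 Y))
    rw [hκfun]
    exact h
  have haval : ∀ i, a i = k * ν Y i + κ Y * ν Y i * 0 + κ Y * (-κ Y * T Y i) := by
    intro i
    have h := hκd.mul (hν' i Y)
    have := (hai i).unique h
    rw [this]; ring
  -- the complexified squared distance
  set f : ℂ → ℂ := fun z => (qC z 0 - (rs 0 : ℂ)) ^ 2 + (qC z 1 - (rs 1 : ℂ)) ^ 2 with hf_def
  have hfA : AnalyticOnNhd ℂ f S :=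
    (((hA 0).sub analyticOnNhd_const).pow 2).add (((hA 1).sub analyticOnNhd_const).pow 2)
  -- real restrictions
  set fr : ℝ → ℝ := fun x => (q x 0 - rs 0) ^ 2 + (q x 1 - rs 1) ^ 2 with hfr_def
  set fr1 : ℝ → ℝ := fun x => 2 * ((q x 0 - rs 0) * T x 0) + 2 * ((q x 1 - rs 1) * T x 1)
    with hfr1_def
  set fr2 : ℝ → ℝ := fun x => 2 * (T x 0 * T x 0 + (q x 0 - rs 0) * (κ x * ν x 0))
      + 2 * (T x 1 * T x 1 + (q x 1 - rs 1) * (κ x * ν x 1)) with hfr2_def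
  have hfr : ∀ x, HasDerivAt fr (fr1 x) x := by
    intro x
    have h0 := (((hq' 0 x).sub_const (rs 0)).pow 2).add (((hq' 1 x).sub_const (rs 1)).pow 2)
    refine h0.congr_deriv (Eq.symm ?_)
    rw [hfr1_def]; push_cast; ring
  have hfr1 : ∀ x, HasDerivAt fr1 (fr2 x) x := by
    intro x
    exact ((((hq' 0 x).sub_const (rs 0)).mul (hT' 0 x)).const_mul 2).add
      ((((hq' 1 x).sub_const (rs 1)).mul (hT' 1 x)).const_mul 2)
  have hfr2Y : HasDerivAt fr2 (2 * d * κ Y ^ 2) Y := by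
    have h0 := (((hT' 0 Y).mul (hT' 0 Y)).add (((hq' 0 Y).sub_const (rs 0)).mul (hai 0))).const_mul
      (2 : ℝ)
    have h1 := (((hT' 1 Y).mul (hT' 1 Y)).add (((hq' 1 Y).sub_const (rs 1)).mul (hai 1))).const_mul
      (2 : ℝ)
    have h := h0.add h1
    refine h.congr_deriv (Eq.symm ?_)
    rw [haval 0, haval 1, hqTc 0, hqTc 1]
    linear_combination (-2 * d * κ Y ^ 2) * hsT + (2 * d * k - 6 * κ Y) * hsTν
  -- derivatives of f at real points
  have hrestr : ∀ x : ℝ, f (x : ℂ) = ((fr x : ℝ) : ℂ) := by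
    intro x
    rw [hf_def, hfr_def]
    simp only [hreal]
    push_cast
    ring
  have hD1 : ∀ x : ℝ, deriv f (x : ℂ) = ((fr1 x : ℝ) : ℂ) := fun x =>
    deriv_eq_of_real_restrict (hfA _ (hmemS x)).differentiableAt ((hfr x).ofReal_comp) hrestr
  have hD2 : ∀ x : ℝ, deriv (deriv f) (x : ℂ) = ((fr2 x : ℝ) : ℂ) := fun x =>
    deriv_eq_of_real_restrict (hfA.deriv _ (hmemS x)).differentiableAt ((hfr1 x).ofReal_comp) hD1
  have hD3 : deriv (deriv (deriv f)) (Y : ℂ) = ((2 * d * κ Y ^ 2 : ℝ) : ℂ) :=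
    deriv_eq_of_real_restrict (hfA.deriv.deriv _ (hmemS Y)).differentiableAt
      (hfr2Y.ofReal_comp) hD2
  -- values at Y
  have hfrY : fr Y = d ^ 2 := by
    rw [hfr_def]
    simp only
    rw [hqTc 0, hqTc 1]
    linear_combination (d ^ 2) * hsT
  have hfr1Y : fr1 Y = -2 * d := by
    rw [hfr1_def]
    simp only
    rw [hqTc 0, hqTc 1]
    linear_combination (-2 * d) * hsT
  have hfr2Yv : fr2 Y = 2 := by
    rw [hfr2_def]
    simp only
    rw [hqTc 0, hqTc 1]
    linear_combination 2 * hsT + (-2 * d * κ Y) * hsTν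
  -- iterated derivatives
  have hit0 : iteratedDeriv 0 f (Y : ℂ) = ((d : ℂ)) ^ 2 := by
    rw [iteratedDeriv_zero, hrestr Y, hfrY]; push_cast; ring
  have hit1 : iteratedDeriv 1 f (Y : ℂ) = -2 * (d : ℂ) := by
    rw [iteratedDeriv_one, hD1 Y, hfr1Y]; push_cast; ring
  have hit2 : iteratedDeriv 2 f (Y : ℂ) = 2 := by
    have h : iteratedDeriv 2 f = deriv (deriv f) := by
      rw [iteratedDeriv_succ, iteratedDeriv_one]
    rw [h, hD2 Y, hfr2Yv]; norm_num
  have hit3 : iteratedDeriv 3 f (Y : ℂ) = 2 * (d : ℂ) * (κ Y : ℂ) ^ 2 := by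
    have h : iteratedDeriv 3 f = deriv (deriv (deriv f)) := by
      rw [iteratedDeriv_succ, iteratedDeriv_succ, iteratedDeriv_one]
    rw [h, hD3]; push_cast; ring
  -- power series of f at Y
  obtain ⟨p, hp⟩ := hfA _ (hmemS Y)
  have hcoeff : ∀ n : ℕ, ((n.factorial : ℕ) : ℂ) * p.coeff n = iteratedDeriv n f (Y : ℂ) := by
    intro n
    obtain ⟨r, hpb⟩ := hp
    have h := hpb.factorial_smul (1 : ℂ) n
    rw [FormalMultilinearSeries.apply_eq_pow_smul_coeff, one_pow, one_smul, nsmul_eq_mul] at h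
    rw [h, iteratedDeriv_eq_iteratedFDeriv]
  have hc0 : p.coeff 0 = (d : ℂ) ^ 2 := by
    have h := hcoeff 0; rw [hit0] at h; simpa using h
  have hc1 : p.coeff 1 = -2 * (d : ℂ) := by
    have h := hcoeff 1; rw [hit1] at h; simpa using h
  have hc2 : p.coeff 2 = 1 := by
    have h := hcoeff 2; rw [hit2] at h
    norm_num [Nat.factorial] at h
    linear_combination h
  have hc3 : p.coeff 3 = (d : ℂ) * (κ Y : ℂ) ^ 2 / 3 := by
    have h := hcoeff 3; rw [hit3] at h
    norm_num [Nat.factorial] at h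
    linear_combination h / 6
  have hps : ∀ w : ℂ, p.partialSum 4 w
      = (d : ℂ) ^ 2 - 2 * d * w + w ^ 2 + ((d : ℂ) * (κ Y : ℂ) ^ 2 / 3) * w ^ 3 := by
    intro w
    rw [FormalMultilinearSeries.partialSum]
    rw [Finset.sum_range_succ, Finset.sum_range_succ, Finset.sum_range_succ,
      Finset.sum_range_succ, Finset.sum_range_zero]
    simp only [FormalMultilinearSeries.apply_eq_pow_smul_coeff, smul_eq_mul, hc0, hc1, hc2, hc3]
    ring
  have hB1 : (fun w : ℂ => f ((Y : ℂ) + w)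
        - ((d : ℂ) ^ 2 - 2 * d * w + w ^ 2 + ((d : ℂ) * (κ Y : ℂ) ^ 2 / 3) * w ^ 3))
      =O[nhds 0] fun w : ℂ => ‖w‖ ^ 4 := by
    have h := hp.isBigO_sub_partialSum_pow 4
    simpa only [hps] using h
  -- the square root part
  have hmem : ∀ᶠ w : ℂ in nhds 0, ((Y : ℂ) + w) ∈ S := by
    filter_upwards [Metric.ball_mem_nhds (0 : ℂ) hε₀] with w hw
    simp only [Metric.mem_ball, dist_zero_right] at hw
    simp only [hS_def, Set.mem_setOf_eq, Complex.add_im, Complex.ofReal_im, zero_add]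
    exact lt_of_le_of_lt (by simpa using Complex.abs_im_le_norm w) hw
  have hfY : f (Y : ℂ) = (d : ℂ) ^ 2 := by rw [hrestr Y, hfrY]; push_cast; ring
  have hcf : Filter.Tendsto (fun w : ℂ => f ((Y : ℂ) + w)) (nhds 0) (nhds ((d : ℂ) ^ 2)) := by
    have h1 : ContinuousAt f ((Y : ℂ)) := (hfA _ (hmemS Y)).differentiableAt.continuousAt
    have h2 : Filter.Tendsto (fun w : ℂ => (Y : ℂ) + w) (nhds 0) (nhds ((Y : ℂ))) := by
      simpa using (continuous_add_left (Y : ℂ)).tendsto (0 : ℂ)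
    have h3 := h1.tendsto.comp h2
    rw [hfY] at h3
    exact h3
  have hd2ne : ((d : ℂ)) ^ 2 ≠ 0 := by
    simp only [ne_eq, pow_eq_zero_iff, Complex.ofReal_eq_zero]
    norm_num
    exact hd.ne'
  have hfne : ∀ᶠ w : ℂ in nhds 0, f ((Y : ℂ) + w) ≠ 0 :=
    hcf.eventually_ne hd2ne
  have hρw : ∀ᶠ w : ℂ in nhds 0, ρC ((Y : ℂ) + w) = f ((Y : ℂ) + w) ^ ((1 : ℂ) / 2) := by
    filter_upwards [hmem] with w hw
    exact hρ _ hw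
  have hsq : ∀ᶠ w : ℂ in nhds 0, (ρC ((Y : ℂ) + w)) ^ 2 = f ((Y : ℂ) + w) := by
    filter_upwards [hρw, hfne] with w h1 h2
    rw [h1, pow_two, ← Complex.cpow_add _ _ h2]
    norm_num
  have hval : ((d : ℂ) ^ 2) ^ ((1 : ℂ) / 2) = (d : ℂ) := by
    have h1 : ((d : ℂ)) ^ 2 = ((d ^ 2 : ℝ) : ℂ) := by push_cast; ring
    rw [h1, show ((1 : ℂ) / 2) = ((1 / 2 : ℝ) : ℂ) by norm_num,
      ← Complex.ofReal_cpow (by positivity), ← Real.sqrt_eq_rpow, Real.sqrt_sq hd.le]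
  have htend : Filter.Tendsto (fun w : ℂ => ρC ((Y : ℂ) + w)) (nhds 0) (nhds (d : ℂ)) := by
    have h2 : ContinuousAt (fun z : ℂ => z ^ ((1 : ℂ) / 2)) ((d : ℂ) ^ 2) := by
      apply continuousAt_cpow_const
      rw [Complex.mem_slitPlane_iff]
      left
      have : ((d : ℂ)) ^ 2 = ((d ^ 2 : ℝ) : ℂ) := by push_cast; ring
      rw [this, Complex.ofReal_re]
      positivity
    have h4 := h2.tendsto.comp hcf
    rw [hval] at h4
    exact h4.congr' (Filter.EventuallyEq.symm hρw)
  have hPt : Filter.Tendsto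
      (fun w : ℂ => (d : ℂ) - w + (1 / 6 : ℂ) * (κ Y : ℂ) ^ 2 * w ^ 3) (nhds 0)
      (nhds (d : ℂ)) := by
    have hco : Continuous fun w : ℂ => (d : ℂ) - w + (1 / 6 : ℂ) * (κ Y : ℂ) ^ 2 * w ^ 3 :=
      (continuous_const.sub continuous_id).add (continuous_const.mul (continuous_pow 3))
    have h0 := hco.tendsto 0
    simpa using h0
  have hlow : ∀ᶠ w : ℂ in nhds 0, d ≤
      ‖ρC ((Y : ℂ) + w) + ((d : ℂ) - w + (1 / 6 : ℂ) * (κ Y : ℂ) ^ 2 * w ^ 3)‖ := by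
    have hsum := (htend.add hPt).norm
    have hlt : d < ‖(d : ℂ) + (d : ℂ)‖ := by
      rw [show (d : ℂ) + (d : ℂ) = ((2 * d : ℝ) : ℂ) by push_cast; ring, Complex.norm_real,
        Real.norm_eq_abs, abs_of_pos (by linarith)]
      linarith
    exact hsum.eventually_const_le hlt
  have hB2 : (fun w : ℂ => ρC ((Y : ℂ) + w)
        - ((d : ℂ) - w + (1 / 6 : ℂ) * (κ Y : ℂ) ^ 2 * w ^ 3))
      =O[nhds 0] fun w : ℂ => (ρC ((Y : ℂ) + w)) ^ 2
        - ((d : ℂ) - w + (1 / 6 : ℂ) * (κ Y : ℂ) ^ 2 * w ^ 3) ^ 2 := by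
    rw [Asymptotics.isBigO_iff]
    refine ⟨d⁻¹, ?_⟩
    filter_upwards [hlow] with w hw
    set A := ρC ((Y : ℂ) + w) - ((d : ℂ) - w + (1 / 6 : ℂ) * (κ Y : ℂ) ^ 2 * w ^ 3) with hA'
    set B := ρC ((Y : ℂ) + w) + ((d : ℂ) - w + (1 / 6 : ℂ) * (κ Y : ℂ) ^ 2 * w ^ 3) with hB'
    have hfac : (ρC ((Y : ℂ) + w)) ^ 2
        - ((d : ℂ) - w + (1 / 6 : ℂ) * (κ Y : ℂ) ^ 2 * w ^ 3) ^ 2 = A * B := by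
      rw [hA', hB']; ring
    rw [hfac, norm_mul]
    have h1 : 0 ≤ ‖A‖ := norm_nonneg _
    have h2 : ‖A‖ * d ≤ ‖A‖ * ‖B‖ := mul_le_mul_of_nonneg_left hw h1
    have h3 : d⁻¹ * (‖A‖ * d) ≤ d⁻¹ * (‖A‖ * ‖B‖) :=
      mul_le_mul_of_nonneg_left h2 (inv_nonneg.mpr hd.le)
    calc ‖A‖ = d⁻¹ * (‖A‖ * d) := by field_simp
    _ ≤ d⁻¹ * (‖A‖ * ‖B‖) := h3
  have h4pow : (fun w : ℂ => w ^ 4) =O[nhds 0] fun w : ℂ => ‖w‖ ^ 4 := by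
    apply Asymptotics.isBigO_of_le
    intro w
    rw [norm_pow]
    simp
  have h6pow : (fun w : ℂ => w ^ 6) =O[nhds 0] fun w : ℂ => ‖w‖ ^ 4 := by
    rw [Asymptotics.isBigO_iff]
    refine ⟨1, ?_⟩
    filter_upwards [Metric.ball_mem_nhds (0 : ℂ) one_pos] with w hw
    simp only [Metric.mem_ball, dist_zero_right] at hw
    rw [norm_pow, one_mul]
    have h1 : ‖w‖ ^ 6 ≤ ‖w‖ ^ 4 := pow_le_pow_of_le_one (norm_nonneg _) hw.le (by norm_num)
    calc ‖w‖ ^ 6 ≤ ‖w‖ ^ 4 := h1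
    _ ≤ ‖(‖w‖ ^ 4 : ℝ)‖ := le_abs_self _
  have hsmall : (fun w : ℂ => ((κ Y : ℂ) ^ 2 / 3) * w ^ 4 - ((κ Y : ℂ) ^ 4 / 36) * w ^ 6)
      =O[nhds 0] fun w : ℂ => ‖w‖ ^ 4 :=
    (h4pow.const_mul_left _).sub (h6pow.const_mul_left _)
  have hB3 : (fun w : ℂ => (ρC ((Y : ℂ) + w)) ^ 2
        - ((d : ℂ) - w + (1 / 6 : ℂ) * (κ Y : ℂ) ^ 2 * w ^ 3) ^ 2)
      =O[nhds 0] fun w : ℂ => ‖w‖ ^ 4 := by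
    have heq : ∀ᶠ w : ℂ in nhds 0, (f ((Y : ℂ) + w)
          - ((d : ℂ) ^ 2 - 2 * d * w + w ^ 2 + ((d : ℂ) * (κ Y : ℂ) ^ 2 / 3) * w ^ 3))
        + (((κ Y : ℂ) ^ 2 / 3) * w ^ 4 - ((κ Y : ℂ) ^ 4 / 36) * w ^ 6)
        = (ρC ((Y : ℂ) + w)) ^ 2
          - ((d : ℂ) - w + (1 / 6 : ℂ) * (κ Y : ℂ) ^ 2 * w ^ 3) ^ 2 := by
      filter_upwards [hsq] with w h1
      rw [h1]; ring
    exact (hB1.add hsmall).congr' heq Filter.EventuallyEq.rfl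
  exact hB2.trans hB3
end
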